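/- The commutator subgroup [Fbr,Fbr] of the braided Thompson group Fbr is perfect, i.e., the commutator subgroup of [Fbr,Fbr] equals [Fbr,Fbr]. -/

import Mathlib

namespace BrThompson

open scoped commutatorElement

/-- Generators of the braided Thompson group `Fbr`: `x i` for `i ≥ 0`,
and `a i j`, `b i j` (the α- and β-generators) for `1 ≤ i < j`. -/
inductive FbrGen : Type
  | x : ℕ → FbrGen
  | a : (i j : ℕ) → 1 ≤ i → i < j → FbrGen
  | b : (i j : ℕ) → 1 ≤ i → i < j → FbrGen

/-- The generator `x i` as an element of the free group. -/
def xg (i : ℕ) : FreeGroup FbrGen := FreeGroup.of (FbrGen.x i)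

/-- The generator `α i j` as an element of the free group (junk value `1` for invalid indices). -/
def ag (i j : ℕ) : FreeGroup FbrGen :=
  if h : 1 ≤ i ∧ i < j then FreeGroup.of (FbrGen.a i j h.1 h.2) else 1

/-- The generator `β i j` as an element of the free group (junk value `1` for invalid indices). -/
def bg (i j : ℕ) : FreeGroup FbrGen :=
  if h : 1 ≤ i ∧ i < j then FreeGroup.of (FbrGen.b i j h.1 h.2) else 1

/-- The defining relations of `Fbr`, each written as a word that is set equal to `1`,
namely `u * v⁻¹` for a relation `u = v`. -/
inductive IsFbrRel : FreeGroup FbrGen → Prop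
  | relA (i j : ℕ) (h : i < j) :
      IsFbrRel (xg j * xg i * (xg i * xg (j + 1))⁻¹)
  | relB1a (r s i j : ℕ) (h0 : 1 ≤ r) (h1 : r < s) (h2 : s < i) (h3 : i < j) :
      IsFbrRel ((ag r s)⁻¹ * ag i j * ag r s * (ag i j)⁻¹)
  | relB1b (i r s j : ℕ) (h0 : 1 ≤ i) (h1 : i < r) (h2 : r < s) (h3 : s < j) :
      IsFbrRel ((ag r s)⁻¹ * ag i j * ag r s * (ag i j)⁻¹)
  | relB2 (r i j : ℕ) (h0 : 1 ≤ r) (h1 : r < i) (h2 : i < j) :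
      IsFbrRel ((ag r i)⁻¹ * ag i j * ag r i * (ag r j * ag i j * (ag r j)⁻¹)⁻¹)
  | relB3 (i s j : ℕ) (h0 : 1 ≤ i) (h1 : i < s) (h2 : s < j) :
      IsFbrRel ((ag i s)⁻¹ * ag i j * ag i s *
        (ag i j * ag s j * ag i j * (ag i j * ag s j)⁻¹)⁻¹)
  | relB4 (r i s j : ℕ) (h0 : 1 ≤ r) (h1 : r < i) (h2 : i < s) (h3 : s < j) :
      IsFbrRel ((ag r s)⁻¹ * ag i j * ag r s *
        (ag r j * ag s j * (ag r j)⁻¹ * (ag s j)⁻¹ * ag i j *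
          (ag r j * ag s j * (ag r j)⁻¹ * (ag s j)⁻¹)⁻¹)⁻¹)
  | relB5a (r s i j : ℕ) (h0 : 1 ≤ r) (h1 : r < s) (h2 : s < i) (h3 : i < j) :
      IsFbrRel ((ag r s)⁻¹ * bg i j * ag r s * (bg i j)⁻¹)
  | relB5b (i r s j : ℕ) (h0 : 1 ≤ i) (h1 : i < r) (h2 : r < s) (h3 : s < j) :
      IsFbrRel ((ag r s)⁻¹ * bg i j * ag r s * (bg i j)⁻¹)
  | relB6 (r i j : ℕ) (h0 : 1 ≤ r) (h1 : r < i) (h2 : i < j) :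
      IsFbrRel ((ag r i)⁻¹ * bg i j * ag r i * (bg r j * bg i j * (bg r j)⁻¹)⁻¹)
  | relB7 (i s j : ℕ) (h0 : 1 ≤ i) (h1 : i < s) (h2 : s < j) :
      IsFbrRel ((ag i s)⁻¹ * bg i j * ag i s *
        (bg i j * bg s j * bg i j * (bg i j * bg s j)⁻¹)⁻¹)
  | relB8 (r i s j : ℕ) (h0 : 1 ≤ r) (h1 : r < i) (h2 : i < s) (h3 : s < j) :
      IsFbrRel ((ag r s)⁻¹ * bg i j * ag r s *
        (bg r j * bg s j * (bg r j)⁻¹ * (bg s j)⁻¹ * bg i j *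
          (bg r j * bg s j * (bg r j)⁻¹ * (bg s j)⁻¹)⁻¹)⁻¹)
  | relC (i j : ℕ) (h0 : 1 ≤ i) (h1 : i < j) :
      IsFbrRel (bg i j * (bg i (j + 1) * ag i j)⁻¹)
  | relD1 (k i j : ℕ) (h0 : 1 ≤ k) (h1 : k < i) (h2 : i < j) :
      IsFbrRel (ag i j * xg (k - 1) * (xg (k - 1) * ag (i + 1) (j + 1))⁻¹)
  | relD2 (i j : ℕ) (h0 : 1 ≤ i) (h1 : i < j) :
      IsFbrRel (ag i j * xg (i - 1) * (xg (i - 1) * ag (i + 1) (j + 1) * ag i (j + 1))⁻¹)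
  | relD3 (i k j : ℕ) (h0 : 1 ≤ i) (h1 : i < k) (h2 : k < j) :
      IsFbrRel (ag i j * xg (k - 1) * (xg (k - 1) * ag i (j + 1))⁻¹)
  | relD4 (i j : ℕ) (h0 : 1 ≤ i) (h1 : i < j) :
      IsFbrRel (ag i j * xg (j - 1) * (xg (j - 1) * ag i (j + 1) * ag i j)⁻¹)
  | relD5 (i j k : ℕ) (h0 : 1 ≤ i) (h1 : i < j) (h2 : j < k) :
      IsFbrRel (ag i j * xg (k - 1) * (xg (k - 1) * ag i j)⁻¹)
  | relD6 (k i j : ℕ) (h0 : 1 ≤ k) (h1 : k < i) (h2 : i < j) :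
      IsFbrRel (bg i j * xg (k - 1) * (xg (k - 1) * bg (i + 1) (j + 1))⁻¹)
  | relD7 (i j : ℕ) (h0 : 1 ≤ i) (h1 : i < j) :
      IsFbrRel (bg i j * xg (i - 1) * (xg (i - 1) * bg (i + 1) (j + 1) * bg i (j + 1))⁻¹)
  | relD8 (i k j : ℕ) (h0 : 1 ≤ i) (h1 : i < k) (h2 : k < j) :
      IsFbrRel (bg i j * xg (k - 1) * (xg (k - 1) * bg i (j + 1))⁻¹)
  | relD9 (i j k : ℕ) (h0 : 1 ≤ i) (h1 : i < j) (h2 : j < k) :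
      IsFbrRel (bg i j * xg (k - 1) * (xg (k - 1) * bg i j)⁻¹)

def fbrRels : Set (FreeGroup FbrGen) := {r | IsFbrRel r}

/-- The braided Thompson group `Fbr` of Brady–Burillo–Cleary–Stein. -/
abbrev Fbr : Type := PresentedGroup fbrRels

/-- The generator `x i` of `Fbr`. -/
def x (i : ℕ) : Fbr := PresentedGroup.of (FbrGen.x i)

/-- The generator `α i j` of `Fbr` (junk value `1` for invalid indices). -/
def al (i j : ℕ) : Fbr :=
  if h : 1 ≤ i ∧ i < j then PresentedGroup.of (FbrGen.a i j h.1 h.2) else 1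

/-- The generator `β i j` of `Fbr` (junk value `1` for invalid indices). -/
def be (i j : ℕ) : Fbr :=
  if h : 1 ≤ i ∧ i < j then PresentedGroup.of (FbrGen.b i j h.1 h.2) else 1

/-! ### Auxiliary development for the proof

We show that the second derived subgroup `DD = [[Fbr,Fbr],[Fbr,Fbr]]` equals `[Fbr,Fbr]`,
by proving that the metabelianization `Fbr ⧸ DD` is abelian via relation chasing. -/

/-- The second derived subgroup of `Fbr`. -/
private abbrev DD : Subgroup Fbr := ⁅commutator Fbr, commutator Fbr⁆

/-- The metabelianization of `Fbr`. -/
private abbrev QB : Type := Fbr ⧸ DD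

/-- Projection from the free group to the metabelianization. -/
private def φ : FreeGroup FbrGen →* QB :=
  (QuotientGroup.mk' DD).comp (PresentedGroup.mk fbrRels)

private lemma hrel {w : FreeGroup FbrGen} (hw : IsFbrRel w) : φ w = 1 := by
  have h1 : PresentedGroup.mk fbrRels w = 1 :=
    (QuotientGroup.eq_one_iff w).mpr (Subgroup.subset_normalClosure hw)
  show (QuotientGroup.mk' DD) (PresentedGroup.mk fbrRels w) = 1
  rw [h1, map_one]

/-- In the metabelianization, any two commutators commute. -/
private lemma hcomm (a b c d : QB) : ⁅⁅a, b⁆, ⁅c, d⁆⁆ = 1 := by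
  obtain ⟨a, rfl⟩ := QuotientGroup.mk'_surjective DD a
  obtain ⟨b, rfl⟩ := QuotientGroup.mk'_surjective DD b
  obtain ⟨c, rfl⟩ := QuotientGroup.mk'_surjective DD c
  obtain ⟨d, rfl⟩ := QuotientGroup.mk'_surjective DD d
  rw [← map_commutatorElement, ← map_commutatorElement, ← map_commutatorElement,
    QuotientGroup.mk'_apply]
  refine (QuotientGroup.eq_one_iff _).mpr ?_
  refine Subgroup.commutator_mem_commutator ?_ ?_ <;>
  · rw [commutator_def]
    exact Subgroup.commutator_mem_commutator (Subgroup.mem_top _) (Subgroup.mem_top _)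

private abbrev XQ (m : ℕ) : QB := φ (xg m)
private abbrev AQ (i j : ℕ) : QB := φ (ag i j)
private abbrev BQ (i j : ℕ) : QB := φ (bg i j)

/-! Extraction of the defining relations as equations in `QB`. -/

private lemma rA (i j : ℕ) (h : i < j) : XQ j * XQ i = XQ i * XQ (j + 1) := by
  have h1 := hrel (IsFbrRel.relA i j h)
  simp only [map_mul, map_inv] at h1
  exact mul_inv_eq_one.mp h1

private lemma rC (i j : ℕ) (h0 : 1 ≤ i) (h1 : i < j) : BQ i j = BQ i (j + 1) * AQ i j := by
  have h := hrel (IsFbrRel.relC i j h0 h1)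
  simp only [map_mul, map_inv] at h
  exact mul_inv_eq_one.mp h

private lemma rD1 (k i j : ℕ) (h0 : 1 ≤ k) (h1 : k < i) (h2 : i < j) :
    AQ i j * XQ (k - 1) = XQ (k - 1) * AQ (i + 1) (j + 1) := by
  have h := hrel (IsFbrRel.relD1 k i j h0 h1 h2)
  simp only [map_mul, map_inv] at h
  exact mul_inv_eq_one.mp h

private lemma rD2 (i j : ℕ) (h0 : 1 ≤ i) (h1 : i < j) :
    AQ i j * XQ (i - 1) = XQ (i - 1) * AQ (i + 1) (j + 1) * AQ i (j + 1) := by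
  have h := hrel (IsFbrRel.relD2 i j h0 h1)
  simp only [map_mul, map_inv] at h
  exact mul_inv_eq_one.mp h

private lemma rD3 (i k j : ℕ) (h0 : 1 ≤ i) (h1 : i < k) (h2 : k < j) :
    AQ i j * XQ (k - 1) = XQ (k - 1) * AQ i (j + 1) := by
  have h := hrel (IsFbrRel.relD3 i k j h0 h1 h2)
  simp only [map_mul, map_inv] at h
  exact mul_inv_eq_one.mp h

private lemma rD4 (i j : ℕ) (h0 : 1 ≤ i) (h1 : i < j) :
    AQ i j * XQ (j - 1) = XQ (j - 1) * AQ i (j + 1) * AQ i j := by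
  have h := hrel (IsFbrRel.relD4 i j h0 h1)
  simp only [map_mul, map_inv] at h
  exact mul_inv_eq_one.mp h

private lemma rD6 (k i j : ℕ) (h0 : 1 ≤ k) (h1 : k < i) (h2 : i < j) :
    BQ i j * XQ (k - 1) = XQ (k - 1) * BQ (i + 1) (j + 1) := by
  have h := hrel (IsFbrRel.relD6 k i j h0 h1 h2)
  simp only [map_mul, map_inv] at h
  exact mul_inv_eq_one.mp h

private lemma rD7 (i j : ℕ) (h0 : 1 ≤ i) (h1 : i < j) :
    BQ i j * XQ (i - 1) = XQ (i - 1) * BQ (i + 1) (j + 1) * BQ i (j + 1) := by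
  have h := hrel (IsFbrRel.relD7 i j h0 h1)
  simp only [map_mul, map_inv] at h
  exact mul_inv_eq_one.mp h

private lemma rD8 (i k j : ℕ) (h0 : 1 ≤ i) (h1 : i < k) (h2 : k < j) :
    BQ i j * XQ (k - 1) = XQ (k - 1) * BQ i (j + 1) := by
  have h := hrel (IsFbrRel.relD8 i k j h0 h1 h2)
  simp only [map_mul, map_inv] at h
  exact mul_inv_eq_one.mp h

private lemma rB7 (i s j : ℕ) (h0 : 1 ≤ i) (h1 : i < s) (h2 : s < j) :
    (AQ i s)⁻¹ * BQ i j * AQ i s =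
      BQ i j * BQ s j * BQ i j * (BQ i j * BQ s j)⁻¹ := by
  have h := hrel (IsFbrRel.relB7 i s j h0 h1 h2)
  simp only [map_mul, map_inv] at h
  exact mul_inv_eq_one.mp h

/-! The metabelian computation showing that the images of the `x`-generators commute. -/

private lemma meta_x {G : Type*} [Group G] (t y : G)
    (hc : ⁅y, t⁆ * (t⁻¹ * y * t * y⁻¹) = (t⁻¹ * y * t * y⁻¹) * ⁅y, t⁆)
    (h3 : t⁻¹ * (t⁻¹ * y * t) * t = y⁻¹ * (t⁻¹ * y * t) * y)
    (h4 : t⁻¹ * (t⁻¹ * (t⁻¹ * y * t) * t) * t = y⁻¹ * (t⁻¹ * (t⁻¹ * y * t) * t) * y) :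
    t * y = y * t := by
  obtain ⟨n, hn⟩ : ∃ n : G, n = t⁻¹ * y * t * y⁻¹ := ⟨_, rfl⟩
  have hcn : ⁅y, t⁆⁻¹ * n * ⁅y, t⁆ = n := by
    rw [hn, mul_assoc, ← hc, inv_mul_cancel_left]
  have e1 : y⁻¹ * n * y = t⁻¹ * n * t * n := by
    calc y⁻¹ * n * y = y⁻¹ * (t⁻¹ * y * t) * y * y⁻¹ := by rw [hn]; group
      _ = t⁻¹ * (t⁻¹ * y * t) * t * y⁻¹ := by rw [h3]
      _ = t⁻¹ * n * t * n := by rw [hn]; group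
  have swap : y⁻¹ * (t⁻¹ * n * t) * y = t⁻¹ * (y⁻¹ * n * y) * t := by
    calc y⁻¹ * (t⁻¹ * n * t) * y = (t * y)⁻¹ * n * (t * y) := by group
      _ = (t * y)⁻¹ * (⁅y, t⁆⁻¹ * n * ⁅y, t⁆) * (t * y) := by rw [hcn]
      _ = t⁻¹ * (y⁻¹ * n * y) * t := by rw [commutatorElement_def]; group
  have e2 : t⁻¹ * (t⁻¹ * n * t * n) * t * n = y⁻¹ * (t⁻¹ * n * t * n) * y := by
    calc t⁻¹ * (t⁻¹ * n * t * n) * t * n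
        = t⁻¹ * (t⁻¹ * (t⁻¹ * y * t) * t) * t * y⁻¹ := by rw [hn]; group
      _ = y⁻¹ * (t⁻¹ * (t⁻¹ * y * t) * t) * y * y⁻¹ := by rw [h4]
      _ = y⁻¹ * (t⁻¹ * n * t * n) * y := by rw [hn]; group
  have key : t⁻¹ * (t⁻¹ * n * t * n) * t * n
      = t⁻¹ * (t⁻¹ * n * t * n) * t * (t⁻¹ * n * t) * n := by
    calc t⁻¹ * (t⁻¹ * n * t * n) * t * n
        = y⁻¹ * (t⁻¹ * n * t * n) * y := e2
      _ = y⁻¹ * (t⁻¹ * n * t) * y * (y⁻¹ * n * y) := by group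
      _ = t⁻¹ * (y⁻¹ * n * y) * t * (y⁻¹ * n * y) := by rw [swap]
      _ = t⁻¹ * (t⁻¹ * n * t * n) * t * (t⁻¹ * n * t * n) := by rw [e1]
      _ = t⁻¹ * (t⁻¹ * n * t * n) * t * (t⁻¹ * n * t) * n := by group
  have h5 : t⁻¹ * n * t = 1 := by
    have h6 := mul_right_cancel key
    exact left_eq_mul.mp h6
  have h7 : n = 1 := by
    calc n = t * (t⁻¹ * n * t) * t⁻¹ := by group
      _ = t * 1 * t⁻¹ := by rw [h5]
      _ = 1 := by group
  have h8 : t⁻¹ * y * t * y⁻¹ = 1 := hn ▸ h7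
  have h9 : y * t = t * y := by
    calc y * t = t * (t⁻¹ * y * t * y⁻¹) * y := by group
      _ = t * 1 * y := by rw [h8]
      _ = t * y := by group
  exact h9.symm

private lemma comm_tu : XQ 0 * XQ 1 = XQ 1 * XQ 0 := by
  have h01 := rA 0 1 (by omega)
  have h02 := rA 0 2 (by omega)
  have h03 := rA 0 3 (by omega)
  have h12 := rA 1 2 (by omega)
  have h13 := rA 1 3 (by omega)
  have hX2 : (XQ 0)⁻¹ * XQ 1 * XQ 0 = XQ 2 := by
    rw [mul_assoc, h01, inv_mul_cancel_left]
  have hX3t : (XQ 0)⁻¹ * XQ 2 * XQ 0 = XQ 3 := by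
    rw [mul_assoc, h02, inv_mul_cancel_left]
  have hX3y : (XQ 1)⁻¹ * XQ 2 * XQ 1 = XQ 3 := by
    rw [mul_assoc, h12, inv_mul_cancel_left]
  have hX4t : (XQ 0)⁻¹ * XQ 3 * XQ 0 = XQ 4 := by
    rw [mul_assoc, h03, inv_mul_cancel_left]
  have hX4y : (XQ 1)⁻¹ * XQ 3 * XQ 1 = XQ 4 := by
    rw [mul_assoc, h13, inv_mul_cancel_left]
  refine meta_x (XQ 0) (XQ 1) ?_ ?_ ?_
  · have h := (commutatorElement_eq_one_iff_commute.mp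
      (hcomm (XQ 1) (XQ 0) (XQ 0)⁻¹ (XQ 1))).eq
    have hw : ⁅(XQ 0)⁻¹, XQ 1⁆ = (XQ 0)⁻¹ * XQ 1 * XQ 0 * (XQ 1)⁻¹ := by
      rw [commutatorElement_def, inv_inv]
    rw [hw] at h
    exact h
  · rw [hX2, hX3t, hX3y]
  · rw [hX2, hX3t, hX4t, hX4y]

private lemma X_eq (m : ℕ) (hm : 1 ≤ m) : XQ m = XQ 1 := by
  induction m, hm using Nat.le_induction with
  | base => rfl
  | succ m hm ih =>
    have h := rA 0 m (by omega)
    have h2 : XQ 0 * XQ (m + 1) = XQ 0 * XQ 1 := by rw [← h, ih, comm_tu]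
    exact mul_left_cancel h2

/-! The α-generators: the "wide" ones are trivial; the "narrow" ones are all equal. -/

private lemma wideA (i j : ℕ) (h0 : 1 ≤ i) (h2 : i + 2 ≤ j) : AQ i j = 1 := by
  have h3 := rD3 i (i + 1) j h0 (by omega) (by omega)
  have h4 := rD4 i j h0 (by omega)
  simp only [Nat.add_sub_cancel] at h3
  rw [X_eq i h0] at h3
  rw [X_eq (j - 1) (by omega)] at h4
  have h5 : XQ 1 * AQ i (j + 1) = XQ 1 * AQ i (j + 1) * AQ i j := h3.symm.trans h4
  exact left_eq_mul.mp h5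

private lemma narrowA_succ (i : ℕ) (hi : 2 ≤ i) : AQ (i + 1) (i + 2) = AQ i (i + 1) := by
  have h2 := rD2 i (i + 1) (by omega) (by omega)
  have h4 := rD4 i (i + 1) (by omega) (by omega)
  simp only [Nat.add_sub_cancel] at h4
  rw [show i + 1 + 1 = i + 2 by omega] at h2 h4
  rw [wideA i (i + 2) (by omega) (by omega), mul_one] at h2
  rw [wideA i (i + 2) (by omega) (by omega), mul_one] at h4
  rw [X_eq (i - 1) (by omega)] at h2
  rw [X_eq i (by omega)] at h4
  exact mul_left_cancel (h2.symm.trans h4)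

private lemma narrowA_ge2 (i : ℕ) (hi : 2 ≤ i) : AQ i (i + 1) = AQ 2 3 := by
  induction i, hi using Nat.le_induction with
  | base => rfl
  | succ m hm ih =>
    rw [show m + 1 + 1 = m + 2 by omega]
    exact (narrowA_succ m hm).trans ih

private lemma a12_23 : AQ 1 2 = AQ 2 3 := by
  have hA := rD2 1 2 (by omega) (by omega)
  norm_num at hA
  rw [wideA 1 3 (by omega) (by omega), mul_one] at hA
  have h34 : AQ 3 4 = AQ 2 3 := by
    have h := narrowA_succ 2 (by omega)
    norm_num at h
    exact h
  have hB := rD1 1 2 3 (by omega) (by omega) (by omega)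
  norm_num at hB
  rw [h34] at hB
  have hgoal : AQ 1 2 * XQ 0 = AQ 2 3 * XQ 0 := by rw [hA, ← hB]
  exact mul_right_cancel hgoal

private lemma narrowA (i : ℕ) (hi : 1 ≤ i) : AQ i (i + 1) = AQ 1 2 := by
  rcases eq_or_lt_of_le hi with h | h
  · rw [← h]
  · rw [narrowA_ge2 i h, a12_23]

private lemma comm_aa_u : XQ 1 * AQ 1 2 = AQ 1 2 * XQ 1 := by
  have h4 := rD4 1 2 (by omega) (by omega)
  norm_num at h4
  rw [wideA 1 3 (by omega) (by omega), mul_one] at h4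
  exact h4.symm

private lemma comm_aa_t : XQ 0 * AQ 1 2 = AQ 1 2 * XQ 0 := by
  have hA := rD2 1 2 (by omega) (by omega)
  norm_num at hA
  rw [wideA 1 3 (by omega) (by omega), mul_one] at hA
  have h34 : AQ 3 4 = AQ 2 3 := by
    have h := narrowA_succ 2 (by omega)
    norm_num at h
    exact h
  have hB := rD1 1 2 3 (by omega) (by omega) (by omega)
  norm_num at hB
  rw [h34] at hB
  rw [a12_23]
  exact hB.symm

/-! The β-generators. -/

private lemma wideB_chain (i : ℕ) (h0 : 1 ≤ i) (d : ℕ) : BQ i (i + 2 + d) = BQ i (i + 2) := by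
  induction d with
  | zero => rfl
  | succ d ih =>
    have hC := rC i (i + 2 + d) h0 (by omega)
    rw [wideA i (i + 2 + d) h0 (by omega), mul_one] at hC
    rw [show i + 2 + (d + 1) = i + 2 + d + 1 by omega, ← hC]
    exact ih

private lemma wideB_eq (i j : ℕ) (h0 : 1 ≤ i) (h2 : i + 2 ≤ j) : BQ i j = BQ i (i + 2) := by
  obtain ⟨d, rfl⟩ : ∃ d, j = i + 2 + d := ⟨j - (i + 2), by omega⟩
  exact wideB_chain i h0 d

private lemma c_next (i : ℕ) (hi : 2 ≤ i) : BQ (i + 1) (i + 3) = 1 := by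
  have h7 := rD7 i (i + 2) (by omega) (by omega)
  rw [show i + 2 + 1 = i + 3 by omega] at h7
  rw [X_eq (i - 1) (by omega)] at h7
  rw [wideB_eq i (i + 3) (by omega) (by omega)] at h7
  have h8 := rD8 i (i + 1) (i + 2) (by omega) (by omega) (by omega)
  simp only [Nat.add_sub_cancel] at h8
  rw [show i + 2 + 1 = i + 3 by omega, X_eq i (by omega),
    wideB_eq i (i + 3) (by omega) (by omega)] at h8
  have h9 : XQ 1 * BQ (i + 1) (i + 3) * BQ i (i + 2) = XQ 1 * BQ i (i + 2) :=
    h7.symm.trans h8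
  rw [mul_assoc] at h9
  have h10 := mul_left_cancel h9
  exact mul_eq_right.mp h10

private lemma wideB_zero (i : ℕ) (hi : 2 ≤ i) : BQ i (i + 2) = 1 := by
  rcases Nat.lt_or_ge i 3 with h | h
  · have hi2 : i = 2 := by omega
    subst hi2
    show BQ 2 4 = 1
    have h6 := rD6 1 2 4 (by omega) (by omega) (by omega)
    norm_num at h6
    have h35 : BQ 3 5 = 1 := by
      have h := c_next 2 (by omega)
      norm_num at h
      exact h
    rw [h35, mul_one] at h6
    exact mul_eq_right.mp h6
  · obtain ⟨m, rfl⟩ : ∃ m, i = m + 1 := ⟨i - 1, by omega⟩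
    rw [show m + 1 + 2 = m + 3 by omega]
    exact c_next m (by omega)

private lemma narrowB (i : ℕ) (hi : 2 ≤ i) : BQ i (i + 1) = AQ 1 2 := by
  have hC := rC i (i + 1) (by omega) (by omega)
  rw [show i + 1 + 1 = i + 2 by omega, wideB_zero i hi, one_mul,
    narrowA i (by omega)] at hC
  exact hC

private lemma B12 : BQ 1 2 = BQ 1 3 * AQ 1 2 := by
  have h := rC 1 2 (by omega) (by omega)
  norm_num at h
  exact h

private lemma B1j (j : ℕ) (hj : 3 ≤ j) : BQ 1 j = BQ 1 3 := by
  have h := wideB_eq 1 j (by omega) (by omega)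
  norm_num at h
  exact h

private lemma comm_c1_u : XQ 1 * BQ 1 3 = BQ 1 3 * XQ 1 := by
  have h8 := rD8 1 2 3 (by omega) (by omega) (by omega)
  norm_num at h8
  rw [B1j 4 (by omega)] at h8
  exact h8.symm

private lemma comm_c1_t : XQ 0 * BQ 1 3 = BQ 1 3 * XQ 0 := by
  have h7 := rD7 1 3 (by omega) (by omega)
  norm_num at h7
  have h24 : BQ 2 4 = 1 := by
    have h := wideB_zero 2 (by omega)
    norm_num at h
    exact h
  rw [h24, mul_one, B1j 4 (by omega)] at h7
  exact h7.symm

private lemma comm_c1_aa : AQ 1 2 * BQ 1 3 = BQ 1 3 * AQ 1 2 := by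
  have h := rB7 1 2 4 (by omega) (by omega) (by omega)
  have h24 : BQ 2 4 = 1 := by
    have h' := wideB_zero 2 (by omega)
    norm_num at h'
    exact h'
  rw [B1j 4 (by omega), h24] at h
  simp only [mul_one] at h
  rw [mul_inv_cancel_right] at h
  calc AQ 1 2 * BQ 1 3 = AQ 1 2 * ((AQ 1 2)⁻¹ * BQ 1 3 * AQ 1 2) := by rw [h]
    _ = BQ 1 3 * AQ 1 2 := by group

/-! Every generator maps into the abelian subgroup generated by `XQ 0, XQ 1, AQ 1 2, BQ 1 3`. -/

private def genSet : Set QB := {XQ 0, XQ 1, AQ 1 2, BQ 1 3}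

private lemma gen_mem (g : FbrGen) :
    φ (FreeGroup.of g) ∈ Subgroup.closure genSet := by
  have ht : XQ 0 ∈ Subgroup.closure genSet := Subgroup.subset_closure (by simp [genSet])
  have hu : XQ 1 ∈ Subgroup.closure genSet := Subgroup.subset_closure (by simp [genSet])
  have ha : AQ 1 2 ∈ Subgroup.closure genSet := Subgroup.subset_closure (by simp [genSet])
  have hb : BQ 1 3 ∈ Subgroup.closure genSet := Subgroup.subset_closure (by simp [genSet])
  cases g with
  | x m =>
    show XQ m ∈ Subgroup.closure genSet
    rcases Nat.eq_zero_or_pos m with hm | hm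
    · subst hm; exact ht
    · rw [X_eq m hm]; exact hu
  | a i j h1 h2 =>
    have hφ : φ (FreeGroup.of (FbrGen.a i j h1 h2)) = AQ i j := by
      show φ (FreeGroup.of (FbrGen.a i j h1 h2)) = φ (ag i j)
      rw [ag, dif_pos (⟨h1, h2⟩ : 1 ≤ i ∧ i < j)]
    rw [hφ]
    rcases Nat.lt_or_ge j (i + 2) with hj | hj
    · have hj1 : j = i + 1 := by omega
      subst hj1
      rw [narrowA i h1]; exact ha
    · rw [wideA i j h1 hj]; exact Subgroup.one_mem _
  | b i j h1 h2 =>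
    have hφ : φ (FreeGroup.of (FbrGen.b i j h1 h2)) = BQ i j := by
      show φ (FreeGroup.of (FbrGen.b i j h1 h2)) = φ (bg i j)
      rw [bg, dif_pos (⟨h1, h2⟩ : 1 ≤ i ∧ i < j)]
    rw [hφ]
    rcases Nat.lt_or_ge i 2 with hi | hi
    · have hi1 : i = 1 := by omega
      subst hi1
      rcases Nat.lt_or_ge j 3 with hj | hj
      · have hj2 : j = 2 := by omega
        subst hj2
        rw [B12]; exact Subgroup.mul_mem _ hb ha
      · rw [B1j j hj]; exact hb
    · rcases Nat.lt_or_ge j (i + 2) with hj | hj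
      · have hj1 : j = i + 1 := by omega
        subst hj1
        rw [narrowB i hi]; exact ha
      · rw [wideB_eq i j (by omega) hj, wideB_zero i hi]
        exact Subgroup.one_mem _

private lemma comm_S : ∀ p ∈ genSet, ∀ q ∈ genSet, Commute p q := by
  have l1 : Commute (XQ 0) (XQ 1) := comm_tu
  have l2 : Commute (XQ 0) (AQ 1 2) := comm_aa_t
  have l3 : Commute (XQ 0) (BQ 1 3) := comm_c1_t
  have l4 : Commute (XQ 1) (AQ 1 2) := comm_aa_u
  have l5 : Commute (XQ 1) (BQ 1 3) := comm_c1_u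
  have l6 : Commute (AQ 1 2) (BQ 1 3) := comm_c1_aa
  intro p hp q hq
  simp only [genSet, Set.mem_insert_iff, Set.mem_singleton_iff] at hp hq
  rcases hp with rfl | rfl | rfl | rfl <;> rcases hq with rfl | rfl | rfl | rfl
  exacts [Commute.refl _, l1, l2, l3,
    l1.symm, Commute.refl _, l4, l5,
    l2.symm, l4.symm, Commute.refl _, l6,
    l3.symm, l5.symm, l6.symm, Commute.refl _]

private lemma QB_comm (p q : QB) : Commute p q := by
  have htop : ∀ z : QB, z ∈ Subgroup.closure genSet := by
    intro z
    obtain ⟨w, rfl⟩ := QuotientGroup.mk'_surjective DD z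
    exact Subgroup.mem_comap.mp
      (PresentedGroup.generated_by fbrRels
        (Subgroup.comap (QuotientGroup.mk' DD) (Subgroup.closure genSet))
        (fun g => Subgroup.mem_comap.mpr (gen_mem g)) w)
  exact Subgroup.closure_induction₂ (p := fun x y _ _ => Commute x y)
    (fun x y hx hy => comm_S x hx y hy)
    (fun x _ => Commute.one_left x) (fun x _ => Commute.one_right x)
    (fun x y z _ _ _ h1 h2 => h1.mul_left h2)
    (fun y z x _ _ _ h1 h2 => h1.mul_right h2)
    (fun x y _ _ h => h.inv_left) (fun x y _ _ h => h.inv_right)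
    (htop p) (htop q)

/-- The commutator subgroup `[Fbr, Fbr]` of the braided Thompson group `Fbr` is perfect. -/
theorem fbr_commutator_perfect : commutator ↥(commutator Fbr) = ⊤ := by
  have heq : (⁅commutator Fbr, commutator Fbr⁆ : Subgroup Fbr) = commutator Fbr := by
    apply le_antisymm
    · calc (⁅commutator Fbr, commutator Fbr⁆ : Subgroup Fbr)
          ≤ ⁅(⊤ : Subgroup Fbr), (⊤ : Subgroup Fbr)⁆ :=
            Subgroup.commutator_mono le_top le_top
        _ = commutator Fbr := (commutator_def Fbr).symm
    · have hsub : commutatorSet Fbr ⊆ (DD : Set Fbr) := by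
        rintro _ ⟨g, h, rfl⟩
        have h1 : (QuotientGroup.mk' DD) ⁅g, h⁆ = 1 := by
          rw [map_commutatorElement]
          exact commutatorElement_eq_one_iff_commute.mpr (QB_comm _ _)
        exact (QuotientGroup.eq_one_iff _).mp h1
      calc commutator Fbr = Subgroup.closure (commutatorSet Fbr) :=
            commutator_eq_closure Fbr
        _ ≤ DD := (Subgroup.closure_le DD).mpr hsub
  have hmap : Subgroup.map (commutator Fbr).subtype (commutator ↥(commutator Fbr))
      = Subgroup.map (commutator Fbr).subtype ⊤ := by
    rw [commutator_def ↥(commutator Fbr), Subgroup.map_commutator,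
      ← MonoidHom.range_eq_map, Subgroup.range_subtype, heq]
  exact Subgroup.map_injective (commutator Fbr).subtype_injective hmap

end BrThompson
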